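/- If the weight sequence (ω_n)_{n≥0} of a unilateral weighted shift S is periodic with period k, then (ω_0⋯ω_{k-1})^{-1} S^k is an isometry; consequently S possesses Bishop's property (β). -/

import Mathlib

open Filter

section Defs

variable {X : Type*} [NormedAddCommGroup X] [NormedSpace ℂ X]

/-- `T` possesses Bishop's property (β). -/
def HasBishopBeta (T : X →L[ℂ] X) : Prop :=
  ∀ U : Set ℂ, IsOpen U →
    ∀ f : ℕ → ℂ → X, (∀ n, AnalyticOnNhd ℂ (f n) U) →
      (∀ K : Set ℂ, K ⊆ U → IsCompact K →
        TendstoUniformlyOn (fun n z => (T - z • (1 : X →L[ℂ] X)) (f n z)) 0 atTop K) →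
      ∀ K : Set ℂ, K ⊆ U → IsCompact K →
        TendstoUniformlyOn (fun n z => f n z) 0 atTop K

end Defs

variable {H : Type*} [NormedAddCommGroup H] [InnerProductSpace ℂ H] [CompleteSpace H]

local notation "⟪" x ", " y "⟫" => @inner ℂ _ _ x y

/-- Norm identity for powers of the shift, on the whole space. -/
theorem shift_pow_norm (S : H →L[ℂ] H)
    (e : HilbertBasis ℕ ℂ H) (ω : ℕ → ℝ) (hpos : ∀ n, 0 < ω n)
    (hS : ∀ n, S (e n) = (ω n : ℂ) • e (n + 1))
    (k : ℕ) (hper : ∀ n, ω (n + k) = ω n) :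
    ∀ x : H, ‖(S ^ k) x‖ = (∏ i ∈ Finset.range k, ω i) * ‖x‖ := by
  set c : ℝ := ∏ i ∈ Finset.range k, ω i with hc_def
  have hc : 0 < c := Finset.prod_pos fun i _ => hpos i
  -- the product over any window of length k equals c
  have hwin : ∀ m, (∏ i ∈ Finset.range k, ω (m + i)) = c := by
    intro m
    induction m with
    | zero => simp [hc_def]
    | succ m ih =>
      have h1 : (∏ i ∈ Finset.range (k+1), ω (m + i))
          = (∏ i ∈ Finset.range k, ω (m + i)) * ω (m + k) := by
        rw [Finset.prod_range_succ]
      have h2 : (∏ i ∈ Finset.range (k+1), ω (m + i))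
          = (∏ i ∈ Finset.range k, ω (m + 1 + i)) * ω m := by
        rw [Finset.prod_range_succ', Nat.add_zero]
        exact congrArg (· * ω m)
          (Finset.prod_congr rfl fun i _ => congrArg ω (by omega))
      have h3 := h1.symm.trans h2
      rw [hper m, ih] at h3
      exact (mul_right_cancel₀ (hpos m).ne' h3.symm)
  -- action of S^k on basis vectors
  have hSpow : ∀ j m, (S ^ j) (e m)
      = ((∏ i ∈ Finset.range j, ω (m + i) : ℝ) : ℂ) • e (m + j) := by
    intro j
    induction j with
    | zero => intro m; simp
    | succ j ih =>
      intro m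
      have hidx : m + 1 + j = m + (j + 1) := by omega
      have hpr : (∏ i ∈ Finset.range j, ω (m + 1 + i))
          = ∏ i ∈ Finset.range j, ω (m + (i + 1)) :=
        Finset.prod_congr rfl fun i _ => congrArg ω (by omega)
      rw [pow_succ, ContinuousLinearMap.mul_apply, hS m, map_smul, ih (m+1),
        smul_smul, Finset.prod_range_succ', hidx, hpr]
      congr 1
      push_cast [Nat.add_zero]
      ring
  have hSk : ∀ m, (S ^ k) (e m) = ((c : ℝ) : ℂ) • e (m + k) := by
    intro m; rw [hSpow k m, hwin m]
  -- inner products are scaled by c^2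
  have horth := orthonormal_iff_ite.mp e.orthonormal
  have hib : ∀ m n, ⟪(S ^ k) (e m), (S ^ k) (e n)⟫
      = ((c : ℝ) : ℂ) ^ 2 * ⟪e m, e n⟫ := by
    intro m n
    rw [hSk, hSk, inner_smul_left, inner_smul_right, horth, horth]
    have h4 : (m + k = n + k) = (m = n) := by
      apply propext; omega
    simp only [h4, Complex.conj_ofReal]
    ring
  have hdense : closure ((Submodule.span ℂ (Set.range ⇑e) : Submodule ℂ H) : Set H)
      = Set.univ := by
    rw [← Submodule.topologicalClosure_coe, e.dense_span]
    rfl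
  -- extend to the whole space by density, first in the right variable
  have hright : ∀ m (y : H), ⟪(S ^ k) (e m), (S ^ k) y⟫
      = ((c : ℝ) : ℂ) ^ 2 * ⟪e m, y⟫ := by
    intro m y
    set s : Set H := {y | ⟪(S ^ k) (e m), (S ^ k) y⟫ = ((c : ℝ) : ℂ) ^ 2 * ⟪e m, y⟫}
      with hs_def
    have hs_closed : IsClosed s := by
      apply isClosed_eq
      · exact (Continuous.inner continuous_const ((S ^ k).continuous))
      · exact continuous_const.mul (Continuous.inner continuous_const continuous_id)
    have hspan : ((Submodule.span ℂ (Set.range ⇑e) : Submodule ℂ H) : Set H) ⊆ s := by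
      intro y hy
      refine Submodule.span_induction (fun x hx => ?_) ?_ ?_ ?_ hy
      · obtain ⟨n, rfl⟩ := hx
        exact hib m n
      · simp [hs_def]
      · intro a b _ _ ha hb
        simp only [hs_def, Set.mem_setOf_eq, map_add, inner_add_right] at ha hb ⊢
        rw [ha, hb]; ring
      · intro a x _ hx
        simp only [hs_def, Set.mem_setOf_eq, map_smul, inner_smul_right] at hx ⊢
        rw [hx]; ring
    have hy' : y ∈ closure ((Submodule.span ℂ (Set.range ⇑e) : Submodule ℂ H) : Set H) := by
      rw [hdense]; trivial
    have : y ∈ closure s := closure_mono hspan hy'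
    rwa [hs_closed.closure_eq] at this
  have hinner : ∀ x y : H, ⟪(S ^ k) x, (S ^ k) y⟫ = ((c : ℝ) : ℂ) ^ 2 * ⟪x, y⟫ := by
    intro x y
    set s : Set H := {x | ⟪(S ^ k) x, (S ^ k) y⟫ = ((c : ℝ) : ℂ) ^ 2 * ⟪x, y⟫}
      with hs_def
    have hs_closed : IsClosed s := by
      apply isClosed_eq
      · exact (Continuous.inner ((S ^ k).continuous) continuous_const)
      · exact continuous_const.mul (Continuous.inner continuous_id continuous_const)
    have hspan : ((Submodule.span ℂ (Set.range ⇑e) : Submodule ℂ H) : Set H) ⊆ s := by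
      intro x hx
      refine Submodule.span_induction (fun x hx => ?_) ?_ ?_ ?_ hx
      · obtain ⟨n, rfl⟩ := hx
        exact hright n y
      · simp [hs_def]
      · intro a b _ _ ha hb
        simp only [hs_def, Set.mem_setOf_eq, map_add, inner_add_left] at ha hb ⊢
        rw [ha, hb]; ring
      · intro a x _ hx
        simp only [hs_def, Set.mem_setOf_eq, map_smul, inner_smul_left] at hx ⊢
        rw [hx]; ring
    have hx' : x ∈ closure ((Submodule.span ℂ (Set.range ⇑e) : Submodule ℂ H) : Set H) := by
      rw [hdense]; trivial
    have : x ∈ closure s := closure_mono hspan hx'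
    rwa [hs_closed.closure_eq] at this
  intro x
  have h5 := hinner x x
  rw [inner_self_eq_norm_sq_to_K, inner_self_eq_norm_sq_to_K] at h5
  have h5' : (Complex.ofReal ‖(S ^ k) x‖) ^ 2
      = (Complex.ofReal c) ^ 2 * (Complex.ofReal ‖x‖) ^ 2 := h5
  have h6 : (‖(S ^ k) x‖ : ℝ) ^ 2 = (c * ‖x‖) ^ 2 := by
    rw [mul_pow]; exact_mod_cast h5'
  calc ‖(S ^ k) x‖ = √(‖(S ^ k) x‖ ^ 2) := (Real.sqrt_sq (norm_nonneg _)).symm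
    _ = √((c * ‖x‖) ^ 2) := by rw [h6]
    _ = c * ‖x‖ := Real.sqrt_sq (by positivity)

/-- A power-norm lower bound: if `‖T^k x‖ = c ‖x‖` for all `x`, with `c = r ^ k`, then
`T - z` is bounded below away from the circle of radius `r`. -/
theorem pow_isometry_lower_bound (T : H →L[ℂ] H) (k : ℕ) (hk : 0 < k) (r : ℝ) (hr : 0 < r)
    (hnormk : ∀ x : H, ‖(T ^ k) x‖ = r ^ k * ‖x‖) (z : ℂ) (x : H) :
    r ^ (k - 1) * |r - ‖z‖| * ‖x‖
      ≤ (∑ i ∈ Finset.range k, ‖z‖ ^ i * ‖T‖ ^ (k - 1 - i)) * ‖(T - z • 1) x‖ := by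
  have hTj : ∀ (j : ℕ) (y : H), ‖(T ^ j) y‖ ≤ ‖T‖ ^ j * ‖y‖ := by
    intro j
    induction j with
    | zero => intro y; simp
    | succ j ih =>
      intro y
      rw [pow_succ, ContinuousLinearMap.mul_apply]
      calc ‖(T ^ j) (T y)‖ ≤ ‖T‖ ^ j * ‖T y‖ := ih (T y)
        _ ≤ ‖T‖ ^ j * (‖T‖ * ‖y‖) :=
          mul_le_mul_of_nonneg_left (T.le_opNorm y) (by positivity)
        _ = ‖T‖ ^ (j + 1) * ‖y‖ := by ring
  have hcomm : Commute (z • (1 : H →L[ℂ] H)) T := by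
    unfold Commute SemiconjBy
    rw [smul_one_mul, mul_smul_comm, mul_one]
  have hgeom := hcomm.geom_sum₂_mul k
  -- apply to x
  have happ : ((z • (1 : H →L[ℂ] H)) ^ k - T ^ k) x
      = (∑ i ∈ Finset.range k,
          (z • (1 : H →L[ℂ] H)) ^ i * T ^ (k - 1 - i)) ((z • (1 : H →L[ℂ] H) - T) x) := by
    rw [← ContinuousLinearMap.mul_apply, hgeom]
  -- lower bound for the LHS
  have hsm : ((z • (1 : H →L[ℂ] H)) ^ k) x = z ^ k • x := by
    rw [smul_pow, one_pow]; rfl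
  have hlow1 : |r ^ k - ‖z‖ ^ k| * ‖x‖ ≤ ‖((z • (1 : H →L[ℂ] H)) ^ k - T ^ k) x‖ := by
    have h1 : ((z • (1 : H →L[ℂ] H)) ^ k - T ^ k) x = z ^ k • x - (T ^ k) x := by
      rw [ContinuousLinearMap.sub_apply, hsm]
    rw [h1]
    have h2 : |‖(T ^ k) x‖ - ‖z ^ k • x‖| ≤ ‖z ^ k • x - (T ^ k) x‖ := by
      rw [norm_sub_rev]
      exact abs_norm_sub_norm_le _ _
    have h3 : ‖(T ^ k) x‖ - ‖z ^ k • x‖ = (r ^ k - ‖z‖ ^ k) * ‖x‖ := by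
      rw [hnormk x, norm_smul, norm_pow]; ring
    calc |r ^ k - ‖z‖ ^ k| * ‖x‖ = |(r ^ k - ‖z‖ ^ k) * ‖x‖| := by
          rw [abs_mul, abs_of_nonneg (norm_nonneg x)]
      _ = |‖(T ^ k) x‖ - ‖z ^ k • x‖| := by rw [h3]
      _ ≤ _ := h2
  -- |r^k - s^k| ≥ r^(k-1) |r - s|
  have hgeomR := geom_sum₂_mul r ‖z‖ k
  have hsum_nonneg : (0:ℝ) ≤ ∑ i ∈ Finset.range k, r ^ i * ‖z‖ ^ (k - 1 - i) :=
    Finset.sum_nonneg fun i _ => by positivity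
  have hsum_ge : r ^ (k - 1) ≤ ∑ i ∈ Finset.range k, r ^ i * ‖z‖ ^ (k - 1 - i) := by
    have hmem : k - 1 ∈ Finset.range k := by
      simp [Finset.mem_range]; omega
    have := Finset.single_le_sum (f := fun i => r ^ i * ‖z‖ ^ (k - 1 - i))
      (fun i _ => by positivity) hmem
    simpa using this
  have habs : r ^ (k - 1) * |r - ‖z‖| ≤ |r ^ k - ‖z‖ ^ k| := by
    rw [← hgeomR, abs_mul]
    rw [abs_of_nonneg hsum_nonneg]
    exact mul_le_mul_of_nonneg_right hsum_ge (abs_nonneg _)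
  -- upper bound for the RHS
  have hup : ‖((z • (1 : H →L[ℂ] H)) ^ k - T ^ k) x‖
      ≤ (∑ i ∈ Finset.range k, ‖z‖ ^ i * ‖T‖ ^ (k - 1 - i)) * ‖(T - z • 1) x‖ := by
    rw [happ]
    have h4 : ((z • (1 : H →L[ℂ] H) - T) x) = -((T - z • 1) x) := by
      simp [ContinuousLinearMap.sub_apply]
    rw [h4, ContinuousLinearMap.sum_apply, Finset.sum_mul]
    refine (norm_sum_le _ _).trans (Finset.sum_le_sum fun i _ => ?_)
    rw [ContinuousLinearMap.mul_apply]
    have h5 : ((z • (1 : H →L[ℂ] H)) ^ i) ((T ^ (k - 1 - i)) (-((T - z • 1) x)))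
        = z ^ i • ((T ^ (k - 1 - i)) (-((T - z • 1) x))) := by
      rw [smul_pow, one_pow]; rfl
    rw [h5, norm_smul, norm_pow]
    have h6 := hTj (k - 1 - i) (-((T - z • 1) x))
    rw [norm_neg] at h6
    calc ‖z‖ ^ i * ‖(T ^ (k - 1 - i)) (-((T - z • 1) x))‖
        ≤ ‖z‖ ^ i * (‖T‖ ^ (k - 1 - i) * ‖(T - z • 1) x‖) := by
          rw [show ‖(T ^ (k-1-i)) (-((T - z•1) x))‖ = ‖(T ^ (k-1-i)) (-((T - z•1) x))‖ from rfl]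
          exact mul_le_mul_of_nonneg_left h6 (by positivity)
      _ = ‖z‖ ^ i * ‖T‖ ^ (k - 1 - i) * ‖(T - z • 1) x‖ := by ring
  calc r ^ (k - 1) * |r - ‖z‖| * ‖x‖ ≤ |r ^ k - ‖z‖ ^ k| * ‖x‖ :=
        mul_le_mul_of_nonneg_right habs (norm_nonneg x)
    _ ≤ ‖((z • (1 : H →L[ℂ] H)) ^ k - T ^ k) x‖ := hlow1
    _ ≤ _ := hup

theorem hasBishopBeta_of_pow_isometry (S : H →L[ℂ] H) (k : ℕ) (hk : 0 < k)
    (r : ℝ) (hr : 0 < r) (hnormk : ∀ x : H, ‖(S ^ k) x‖ = r ^ k * ‖x‖) :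
    HasBishopBeta S := by
  intro U hU f hf hg K hKU hK
  obtain ⟨δ, hδ, hKδU⟩ := hK.exists_cthickening_subset_open hU hKU
  obtain ⟨K', hK'def⟩ : ∃ K', K' = Metric.cthickening δ K := ⟨_, rfl⟩
  rw [← hK'def] at hKδU
  have hK'cpt : IsCompact K' := hK'def ▸ hK.cthickening
  have hKK' : K ⊆ K' := hK'def ▸ Metric.self_subset_cthickening K
  obtain ⟨R0, hR0⟩ := hK'cpt.isBounded.subset_closedBall 0
  obtain ⟨R, hRdef⟩ : ∃ R : ℝ, R = max R0 0 := ⟨_, rfl⟩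
  have hR : ∀ z ∈ K', ‖z‖ ≤ R := by
    intro z hz
    have := hR0 hz
    rw [Metric.mem_closedBall, dist_zero_right] at this
    exact this.trans (hRdef ▸ le_max_left _ _)
  have hR0' : (0:ℝ) ≤ R := hRdef ▸ le_max_right _ _
  obtain ⟨Dm, hDmdef⟩ : ∃ D : ℝ, D = ∑ i ∈ Finset.range k, R ^ i * ‖S‖ ^ (k - 1 - i) := ⟨_, rfl⟩
  have hDm0 : 0 ≤ Dm := hDmdef ▸ Finset.sum_nonneg fun i _ => by positivity
  have hlow' : ∀ z ∈ K', ∀ x : H,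
      r ^ (k - 1) * |r - ‖z‖| * ‖x‖ ≤ Dm * ‖(S - z • 1) x‖ := by
    intro z hz x
    refine (pow_isometry_lower_bound S k hk r hr hnormk z x).trans ?_
    rw [hDmdef]
    refine mul_le_mul_of_nonneg_right ?_ (norm_nonneg _)
    refine Finset.sum_le_sum fun i _ => ?_
    have h1 := hR z hz
    have h2 := norm_nonneg z
    gcongr
  obtain ⟨C, hCdef⟩ : ∃ C : ℝ, C = 2 * Dm / r ^ k + 2 * (R + r) * Dm / (r ^ k * δ) := ⟨_, rfl⟩
  have hrk1 : r ^ (k - 1) * r = r ^ k := by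
    conv_rhs => rw [← Nat.sub_add_cancel hk]
    rw [pow_succ]
  have hC0 : 0 ≤ C := by rw [hCdef]; positivity
  -- the key pointwise estimate
  have key : ∀ h : ℂ → H, (∀ z ∈ U, DifferentiableAt ℂ h z) →
      ∀ ε : ℝ, 0 ≤ ε → (∀ z ∈ K', ‖(S - z • 1) (h z)‖ ≤ ε) →
      ∀ z₀ ∈ K, ‖h z₀‖ ≤ C * ε := by
    intro h hdiff ε hε hb z₀ hz₀
    have hz₀K' : z₀ ∈ K' := hKK' hz₀
    have hCsplit : 2 * Dm / r ^ k * ε + 2 * (R + r) * Dm / (r ^ k * δ) * ε = C * ε := by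
      rw [hCdef]; ring
    by_cases hsmall : ‖z₀‖ ≤ r / 2
    · -- away from the critical circle : direct bound
      have h1 := hlow' z₀ hz₀K' (h z₀)
      have h2 : r / 2 ≤ |r - ‖z₀‖| := by
        rw [abs_of_nonneg (by linarith [norm_nonneg z₀])]
        linarith [norm_nonneg z₀]
      have h3 : r ^ (k - 1) * (r / 2) * ‖h z₀‖ ≤ Dm * ε := by
        calc r ^ (k - 1) * (r / 2) * ‖h z₀‖ ≤ r ^ (k - 1) * |r - ‖z₀‖| * ‖h z₀‖ := by
              gcongr
            _ ≤ Dm * ‖(S - z₀ • 1) (h z₀)‖ := h1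
            _ ≤ Dm * ε := mul_le_mul_of_nonneg_left (hb z₀ hz₀K') hDm0
      have h4 : ‖h z₀‖ ≤ 2 * Dm / r ^ k * ε := by
        rw [div_mul_eq_mul_div, le_div_iff₀ (by positivity)]
        have h3' : r ^ k * ‖h z₀‖ ≤ 2 * (Dm * ε) := by
          calc r ^ k * ‖h z₀‖ = 2 * (r ^ (k - 1) * (r / 2) * ‖h z₀‖) := by
                rw [← hrk1]; ring
            _ ≤ 2 * (Dm * ε) := by linarith
        linarith
      have h5 : 0 ≤ 2 * (R + r) * Dm / (r ^ k * δ) * ε := by positivity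
      linarith [hCsplit]
    · -- near the critical circle : use the maximum principle
      push_neg at hsmall
      have hball : Metric.closedBall z₀ δ ⊆ K' :=
        hK'def ▸ Metric.closedBall_subset_cthickening hz₀ δ
      obtain ⟨Q, hQdef⟩ : ∃ Q : ℂ → ℂ, Q = fun z => (starRingEnd ℂ) z₀ * (z - z₀) ^ 2
          + ((‖z₀‖ ^ 2 + δ ^ 2 - r ^ 2 : ℝ) : ℂ) * (z - z₀) + z₀ * ((δ ^ 2 : ℝ) : ℂ) := ⟨_, rfl⟩
      obtain ⟨F, hFdef⟩ : ∃ F : ℂ → H, F = fun z => Q z • h z := ⟨_, rfl⟩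
      have hQdiff : Differentiable ℂ Q := by
        rw [hQdef]
        exact (((differentiable_const _).mul ((differentiable_id.sub_const _).pow 2)).add
          ((differentiable_const _).mul (differentiable_id.sub_const _))).add
          (differentiable_const _)
      have hFdiff : DiffContOnCl ℂ F (Metric.ball z₀ δ) := by
        apply DifferentiableOn.diffContOnCl
        rw [closure_ball z₀ hδ.ne']
        intro z hz
        rw [hFdef]
        exact ((hQdiff z).differentiableWithinAt).smul
          ((hdiff z (hKδU (hball hz))).differentiableWithinAt)
      obtain ⟨B, hBdef⟩ : ∃ B : ℝ, B = δ * (R + r) * (Dm * ε) / r ^ (k - 1) := ⟨_, rfl⟩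
      have hfront : ∀ z ∈ frontier (Metric.ball z₀ δ), ‖F z‖ ≤ B := by
        rw [frontier_ball z₀ hδ.ne']
        intro z hz
        have hzK' : z ∈ K' := hball (Metric.sphere_subset_closedBall hz)
        have hzd : ‖z - z₀‖ = δ := mem_sphere_iff_norm.mp hz
        have key1 : (z - z₀) * (starRingEnd ℂ) (z - z₀) = ((δ ^ 2 : ℝ) : ℂ) := by
          rw [Complex.mul_conj, Complex.normSq_eq_norm_sq, hzd]
        have key2 : z₀ * (starRingEnd ℂ) z₀ = ((‖z₀‖ ^ 2 : ℝ) : ℂ) := by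
          rw [Complex.mul_conj, Complex.normSq_eq_norm_sq]
        have key3 : (starRingEnd ℂ) (z - z₀) = (starRingEnd ℂ) z - (starRingEnd ℂ) z₀ :=
          map_sub _ _ _
        have hQz : Q z = (z - z₀) * (z * (starRingEnd ℂ) z - ((r ^ 2 : ℝ) : ℂ)) := by
          rw [hQdef]
          push_cast at key1 key2 ⊢
          linear_combination (-z) * key1 + (-(z - z₀)) * key2 + (z * (z - z₀)) * key3
        have hzz : z * (starRingEnd ℂ) z - ((r ^ 2 : ℝ) : ℂ) = ((‖z‖ ^ 2 - r ^ 2 : ℝ) : ℂ) := by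
          rw [Complex.mul_conj, Complex.normSq_eq_norm_sq]
          push_cast
          ring
        have hQnorm : ‖Q z‖ = δ * |‖z‖ ^ 2 - r ^ 2| := by
          rw [hQz, hzz, norm_mul, hzd, Complex.norm_real, Real.norm_eq_abs]
        have habs2 : |‖z‖ ^ 2 - r ^ 2| = |r - ‖z‖| * (‖z‖ + r) := by
          rw [abs_sub_comm r ‖z‖,
            show ‖z‖ ^ 2 - r ^ 2 = (‖z‖ - r) * (‖z‖ + r) from by ring, abs_mul,
            abs_of_nonneg (show (0:ℝ) ≤ ‖z‖ + r from by positivity)]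
        have h1 : r ^ (k - 1) * |r - ‖z‖| * ‖h z‖ ≤ Dm * ε := by
          calc r ^ (k - 1) * |r - ‖z‖| * ‖h z‖ ≤ Dm * ‖(S - z • 1) (h z)‖ := hlow' z hzK' (h z)
            _ ≤ Dm * ε := mul_le_mul_of_nonneg_left (hb z hzK') hDm0
        have hFz : ‖F z‖ = δ * (|r - ‖z‖| * (‖z‖ + r)) * ‖h z‖ := by
          rw [hFdef]
          simp only [norm_smul]
          rw [hQnorm, habs2]
        rw [hFz, hBdef, le_div_iff₀ (by positivity)]
        have h2 : δ * ((‖z‖ + r) * (r ^ (k - 1) * |r - ‖z‖| * ‖h z‖))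
            ≤ δ * ((‖z‖ + r) * (Dm * ε)) := by
          refine mul_le_mul_of_nonneg_left ?_ hδ.le
          exact mul_le_mul_of_nonneg_left h1 (by positivity)
        have h3 : δ * ((‖z‖ + r) * (Dm * ε)) ≤ δ * ((R + r) * (Dm * ε)) := by
          refine mul_le_mul_of_nonneg_left ?_ hδ.le
          refine mul_le_mul_of_nonneg_right ?_ (by positivity)
          linarith [hR z hzK']
        nlinarith [h2, h3]
      have hmax := Complex.norm_le_of_forall_mem_frontier_norm_le Metric.isBounded_ball
        hFdiff hfront (subset_closure (Metric.mem_ball_self hδ))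
      have hQz₀ : Q z₀ = z₀ * ((δ ^ 2 : ℝ) : ℂ) := by
        rw [hQdef]; ring
      have hFz₀ : ‖F z₀‖ = ‖z₀‖ * δ ^ 2 * ‖h z₀‖ := by
        rw [hFdef]
        simp only [norm_smul]
        rw [hQz₀, norm_mul, Complex.norm_real, Real.norm_eq_abs,
          abs_of_nonneg (show (0:ℝ) ≤ δ ^ 2 from by positivity)]
      rw [hFz₀, hBdef] at hmax
      -- from (r/2) δ² ‖h z₀‖ ≤ B conclude
      have h6 : r / 2 * δ ^ 2 * ‖h z₀‖ ≤ δ * (R + r) * (Dm * ε) / r ^ (k - 1) := by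
        refine le_trans ?_ hmax
        have := hsmall.le
        gcongr
      rw [le_div_iff₀ (by positivity)] at h6
      have h7 : ‖h z₀‖ ≤ 2 * (R + r) * Dm / (r ^ k * δ) * ε := by
        rw [div_mul_eq_mul_div, le_div_iff₀ (by positivity)]
        have e1 : ‖h z₀‖ * (r ^ k * δ) * δ = (r / 2 * δ ^ 2 * ‖h z₀‖ * r ^ (k - 1)) * 2 := by
          rw [← hrk1]; ring
        have e2 : ‖h z₀‖ * (r ^ k * δ) * δ ≤ (2 * (R + r) * Dm * ε) * δ := by
          rw [e1]; linarith
        exact le_of_mul_le_mul_right e2 hδ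
      have h8 : 0 ≤ 2 * Dm / r ^ k * ε := by positivity
      linarith [hCsplit]
  -- assemble the uniform convergence
  rw [Metric.tendstoUniformlyOn_iff]
  intro ε hε
  have hgK' := hg K' hKδU hK'cpt
  rw [Metric.tendstoUniformlyOn_iff] at hgK'
  have hε' : 0 < ε / (C + 1) := by positivity
  filter_upwards [hgK' (ε / (C + 1)) hε'] with n hn
  intro z hz
  have hbn : ∀ w ∈ K', ‖(S - w • 1) (f n w)‖ ≤ ε / (C + 1) := by
    intro w hw
    have := hn w hw
    rw [Pi.zero_apply, dist_zero_left] at this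
    exact this.le
  have hkey := key (f n) (fun w hw => ((hf n) w hw).differentiableAt) (ε / (C + 1)) hε'.le hbn z hz
  rw [Pi.zero_apply, dist_zero_left]
  have hlt : C / (C + 1) < 1 := by
    rw [div_lt_one (by positivity)]
    linarith
  calc ‖f n z‖ ≤ C * (ε / (C + 1)) := hkey
    _ = C / (C + 1) * ε := by ring
    _ < 1 * ε := mul_lt_mul_of_pos_right hlt hε
    _ = ε := one_mul ε

/-- If the weight sequence of a unilateral weighted shift `S` is periodic with period `k`,
then `(ω 0 ⋯ ω (k-1))⁻¹ • S ^ k` is an isometry; consequently `S` possesses Bishop's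
property (β). -/
theorem periodic_weights_bishopBeta (S : H →L[ℂ] H)
    (e : HilbertBasis ℕ ℂ H) (ω : ℕ → ℝ) (hpos : ∀ n, 0 < ω n)
    (hS : ∀ n, S (e n) = (ω n : ℂ) • e (n + 1))
    (k : ℕ) (hk : 0 < k) (hper : ∀ n, ω (n + k) = ω n) :
    Isometry ⇑((((∏ i ∈ Finset.range k, ω i : ℝ) : ℂ)⁻¹ • S ^ k)) ∧
    HasBishopBeta S := by
  have hc : 0 < ∏ i ∈ Finset.range k, ω i := Finset.prod_pos fun i _ => hpos i
  have hnormk := shift_pow_norm S e ω hpos hS k hper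
  constructor
  · apply AddMonoidHomClass.isometry_of_norm
    intro x
    rw [ContinuousLinearMap.smul_apply, norm_smul, hnormk x, norm_inv, Complex.norm_real,
      Real.norm_eq_abs, abs_of_pos hc, ← mul_assoc, inv_mul_cancel₀ hc.ne', one_mul]
  · have hrk : ((∏ i ∈ Finset.range k, ω i) ^ ((k : ℝ))⁻¹) ^ k = ∏ i ∈ Finset.range k, ω i :=
      Real.rpow_inv_natCast_pow hc.le hk.ne'
    exact hasBishopBeta_of_pow_isometry S k hk _ (Real.rpow_pos_of_pos hc _)
      (fun x => by rw [hnormk x, hrk])
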